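/- arXiv:2605.18335 — 2 statements merged into one kernel-verified Lean document; each statement's English description precedes it below -/
import Mathlib

section
/- Let n = 2^ℓ, let S = {u_1, ..., u_m} be a set of m distinct nonzero vectors in F_2^d, and let h : F_2^d → F_2^ℓ be a uniformly random linear map. Fix y ∈ F_2^ℓ, define Z_y = |{i : h(u_i) = y}|, and set λ = m/n. Then for every integer r ≥ 0, with a = ⌈log_2(r+2)⌉, we have Pr[Z_y > r] ≤ λ^a · (∏_{j=0}^{a-1} (r + 2 - 2^j))^{-1}. -/
/-- The space of F_2-linear maps from F_2^d to F_2^ℓ. -/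
abbrev Lin (d ℓ : ℕ) := (Fin d → ZMod 2) →ₗ[ZMod 2] (Fin ℓ → ZMod 2)

open Function Submodule Set

instance (d ℓ : ℕ) : Finite ((Fin d → ZMod 2) →ₗ[ZMod 2] (Fin ℓ → ZMod 2)) :=
  Finite.of_injective _ DFunLike.coe_injective

/-- Fiber cardinality for evaluation at a linearly independent family. -/
lemma fiber_card_mul {d ℓ a : ℕ} (v : Fin a → (Fin d → ZMod 2))
    (hv : LinearIndependent (ZMod 2) v) (w : Fin a → (Fin ℓ → ZMod 2)) :
    Nat.card {h : (Fin d → ZMod 2) →ₗ[ZMod 2] (Fin ℓ → ZMod 2) // ∀ j, h (v j) = w j}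
      * (2 ^ ℓ) ^ a
      = Nat.card ((Fin d → ZMod 2) →ₗ[ZMod 2] (Fin ℓ → ZMod 2)) := by
  classical
  set L := (Fin d → ZMod 2) →ₗ[ZMod 2] (Fin ℓ → ZMod 2)
  letI : Fintype L := Fintype.ofFinite _
  let E : L →ₗ[ZMod 2] (Fin a → (Fin ℓ → ZMod 2)) :=
    LinearMap.pi fun j => LinearMap.applyₗ (v j)
  have hEapp : ∀ (h : L) j, E h j = h (v j) := fun h j => rfl
  have hsurj : Function.Surjective E := by
    intro w'
    obtain ⟨g, hg⟩ := (Finsupp.linearCombination (ZMod 2) v).exists_leftInverse_of_injective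
      (LinearMap.ker_eq_bot.mpr hv)
    refine ⟨(Finsupp.linearCombination (ZMod 2) w').comp g, ?_⟩
    funext j
    have h1 : g (v j) = Finsupp.single j 1 := by
      have := LinearMap.congr_fun hg (Finsupp.single j (1 : ZMod 2))
      simpa [Finsupp.linearCombination_single] using this
    show (Finsupp.linearCombination (ZMod 2) w') (g (v j)) = w' j
    rw [h1, Finsupp.linearCombination_single, one_smul]
  have hfib : ∀ w', Nat.card {h : L // E h = w'} = Nat.card (LinearMap.ker E) := by
    intro w'
    obtain ⟨p, hp⟩ := hsurj w'
    refine Nat.card_congr ⟨fun h => ⟨h.1 - p, ?_⟩, fun k => ⟨k.1 + p, ?_⟩, fun h => by simp, fun k => by simp⟩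
    · simp [LinearMap.mem_ker, map_sub, h.2, hp]
    · have hk := k.2
      rw [LinearMap.mem_ker] at hk
      rw [map_add, hk, hp, zero_add]
  have hsplit : Nat.card L
      = ∑ w' : Fin a → (Fin ℓ → ZMod 2), Nat.card {h : L // E h = w'} := by
    rw [Nat.card_eq_fintype_card,
      ← Fintype.card_congr (Equiv.sigmaFiberEquiv (fun h : L => E h)),
      Fintype.card_sigma]
    simp [Nat.card_eq_fintype_card]
  have hcardW : Fintype.card (Fin a → (Fin ℓ → ZMod 2)) = (2 ^ ℓ) ^ a := by
    simp [Fintype.card_fun]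
  have heq : Nat.card {h : L // ∀ j, h (v j) = w j} = Nat.card {h : L // E h = w} := by
    apply Nat.card_congr
    exact Equiv.subtypeEquivRight (fun h => by
      constructor
      · intro hh; funext j; rw [hEapp]; exact hh j
      · intro hh j; rw [← hEapp, hh])
  rw [heq, hfib w, hsplit]
  simp only [hfib]
  rw [Finset.sum_const, Finset.card_univ, hcardW, smul_eq_mul, mul_comm]


lemma card_span_eq {d a : ℕ} (w : Fin a → (Fin d → ZMod 2))
    (hw : LinearIndependent (ZMod 2) w) :
    Nat.card (span (ZMod 2) (Set.range w)) = 2 ^ a := by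
  have e := (Module.Basis.span hw).equivFun
  rw [Nat.card_congr e.toEquiv]
  simp [Nat.card_eq_fintype_card]

open Classical in
/-- tuples with entries in `T` and linearly independent images under `v`. -/
noncomputable def goodSet {m d : ℕ} (v : Fin m → (Fin d → ZMod 2)) (T : Finset (Fin m))
    (a : ℕ) : Finset (Fin a → Fin m) :=
  Finset.univ.filter fun t => (∀ j, t j ∈ T) ∧ LinearIndependent (ZMod 2) (v ∘ t)

lemma goodSet_card {m d : ℕ} (v : Fin m → (Fin d → ZMod 2))
    (hv : Function.Injective v) (hv0 : ∀ i, v i ≠ 0) (T : Finset (Fin m)) (a : ℕ) :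
    ∏ j ∈ Finset.range a, (T.card + 1 - 2 ^ j) ≤ (goodSet v T a).card := by
  classical
  induction a with
  | zero =>
    rw [Finset.range_zero, Finset.prod_empty]
    refine Finset.card_pos.mpr ⟨fun j => j.elim0, ?_⟩
    simp only [goodSet, Finset.mem_filter, Finset.mem_univ, true_and]
    exact ⟨fun j => j.elim0, linearIndependent_empty_type⟩
  | succ a ih =>
    rw [Finset.prod_range_succ]
    set ext : (Fin a → Fin m) → Finset (Fin m) :=
      fun s => T.filter (fun i => v i ∉ span (ZMod 2) (Set.range (v ∘ s))) with hext_def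
    have hmem : ∀ s, s ∈ goodSet v T a ↔
        (∀ j, s j ∈ T) ∧ LinearIndependent (ZMod 2) (v ∘ s) := by
      intro s; simp [goodSet]
    have hmem' : ∀ (t : Fin (a+1) → Fin m), t ∈ goodSet v T (a+1) ↔
        (∀ j, t j ∈ T) ∧ LinearIndependent (ZMod 2) (v ∘ t) := by
      intro t; simp [goodSet]
    -- bijection between sigma and goodSet (a+1)
    have hcard : ((goodSet v T a).sigma ext).card = (goodSet v T (a+1)).card := by
      apply Finset.card_bij (fun x _ => Fin.snoc x.1 x.2)
      · rintro ⟨s, i⟩ hx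
        rw [Finset.mem_sigma] at hx
        obtain ⟨hs, hi⟩ := hx
        rw [hmem] at hs
        rw [hext_def, Finset.mem_filter] at hi
        rw [hmem']
        constructor
        · intro j
          refine Fin.lastCases ?_ ?_ j
          · rw [Fin.snoc_last]; exact hi.1
          · intro k; rw [Fin.snoc_castSucc]; exact hs.1 k
        · rw [Fin.comp_snoc]
          exact linearIndependent_fin_snoc.mpr ⟨hs.2, hi.2⟩
      · rintro ⟨s, i⟩ hx ⟨s', i'⟩ hx' h
        have h1 : s = s' := by
          have := congrArg Fin.init h
          simpa [Fin.init_snoc] using this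
        have h2 : i = i' := by
          have := congrArg (fun f => f (Fin.last a)) h
          simpa [Fin.snoc_last] using this
        simp [h1, h2]
      · intro t ht
        rw [hmem'] at ht
        have hrepr : Fin.snoc (Fin.init t) (t (Fin.last a)) = t := Fin.snoc_init_self t
        have hindep : LinearIndependent (ZMod 2) (v ∘ Fin.init t) ∧
            v (t (Fin.last a)) ∉ span (ZMod 2) (Set.range (v ∘ Fin.init t)) := by
          have := ht.2
          rw [← hrepr, Fin.comp_snoc, linearIndependent_fin_snoc] at this
          exact this
        refine ⟨⟨Fin.init t, t (Fin.last a)⟩, ?_, hrepr⟩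
        rw [Finset.mem_sigma, hmem, hext_def, Finset.mem_filter]
        exact ⟨⟨fun j => ht.1 _, hindep.1⟩, ht.1 _, hindep.2⟩
    have hextcard : ∀ s ∈ goodSet v T a, T.card + 1 - 2 ^ a ≤ (ext s).card := by
      intro s hs
      rw [hmem] at hs
      set Sp := span (ZMod 2) (Set.range (v ∘ s)) with hSp
      have hspcard : Nat.card Sp = 2 ^ a := card_span_eq _ hs.2
      have hsp_fin : ((Sp : Set (Fin d → ZMod 2))).toFinset.card = 2 ^ a := by
        rw [Set.toFinset_card, ← Nat.card_eq_fintype_card]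
        exact hspcard
      have hbad : (T.filter (fun i => v i ∈ Sp)).card ≤ 2 ^ a - 1 := by
        have hle : (T.filter (fun i => v i ∈ Sp)).card ≤
            (((Sp : Set (Fin d → ZMod 2))).toFinset.erase 0).card := by
          apply Finset.card_le_card_of_injOn (fun i => v i)
          · intro i hi
            rw [Finset.mem_coe, Finset.mem_filter] at hi
            rw [Finset.mem_coe, Finset.mem_erase]
            exact ⟨hv0 i, by rw [Set.mem_toFinset]; exact hi.2⟩
          · intro i _ j _ hij; exact hv hij
        refine hle.trans ?_
        rw [Finset.card_erase_of_mem (by rw [Set.mem_toFinset]; exact Sp.zero_mem), hsp_fin]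
      have hsum := Finset.card_filter_add_card_filter_not
        (s := T) (p := fun i => v i ∈ Sp)
      have hpow : 0 < 2 ^ a := Nat.pow_pos (n := a) (by norm_num)
      have : (ext s).card = (T.filter (fun i => ¬ v i ∈ Sp)).card := rfl
      omega
    calc (∏ j ∈ Finset.range a, (T.card + 1 - 2 ^ j)) * (T.card + 1 - 2 ^ a)
        ≤ (goodSet v T a).card * (T.card + 1 - 2 ^ a) :=
          Nat.mul_le_mul_right _ ih
      _ = (goodSet v T a).card • (T.card + 1 - 2 ^ a) := by rw [smul_eq_mul]
      _ ≤ ∑ s ∈ goodSet v T a, (ext s).card := Finset.card_nsmul_le_sum _ _ _ hextcard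
      _ = ((goodSet v T a).sigma ext).card := (Finset.card_sigma _ _).symm
      _ = (goodSet v T (a+1)).card := hcard

/-- Let n = 2^ℓ, let S = {u_1, ..., u_m} be a set of m distinct nonzero vectors in
F_2^d, and let h : F_2^d → F_2^ℓ be a uniformly random linear map. Fix y ∈ F_2^ℓ, define
Z_y = |{i : h(u_i) = y}|, and set λ = m/n. Then for every integer r ≥ 0, with a = ⌈log_2(r+2)⌉,
we have Pr[Z_y > r] ≤ λ^a · (∏_{j=0}^{a-1} (r + 2 - 2^j))^{-1}. -/
theorem stmt_13 (ℓ d m n : ℕ) (hn : n = 2 ^ ℓ)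
    (u : Fin m → (Fin d → ZMod 2))
    (hu_inj : Function.Injective u) (hu_ne : ∀ i, u i ≠ 0)
    (y : Fin ℓ → ZMod 2) (lam : ℝ) (hlam : lam = (m : ℝ) / n)
    (r a : ℕ) (ha : a = Nat.clog 2 (r + 2)) :
    (Nat.card {h : Lin d ℓ // r < Nat.card {i : Fin m // h (u i) = y}} : ℝ) /
        (Nat.card (Lin d ℓ) : ℝ) ≤
      lam ^ a * ((∏ j ∈ Finset.range a, (r + 2 - 2 ^ j) : ℕ) : ℝ)⁻¹ := by
  classical
  letI : Fintype (Lin d ℓ) := Fintype.ofFinite _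
  set A := Fintype.card (Lin d ℓ) with hA
  set T : Lin d ℓ → Finset (Fin m) := fun h => Finset.univ.filter (fun i => h (u i) = y)
    with hT
  set Bad : Finset (Lin d ℓ) := Finset.univ.filter (fun h => r < (T h).card) with hBad
  set P : ℕ := ∏ j ∈ Finset.range a, (r + 2 - 2 ^ j) with hP
  set N : Lin d ℓ → ℕ := fun h => (goodSet u (T h) a).card with hN
  have hTcard : ∀ h : Lin d ℓ, Nat.card {i : Fin m // h (u i) = y} = (T h).card := fun h => by
    rw [Nat.card_eq_fintype_card, Fintype.card_subtype]
  -- rewrite numerator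
  have hnum : Nat.card {h : Lin d ℓ // r < Nat.card {i : Fin m // h (u i) = y}} = Bad.card := by
    rw [Nat.card_eq_fintype_card, Fintype.card_subtype, hBad]
    congr 1
    apply Finset.filter_congr
    intro h _
    simp [← Nat.card_eq_fintype_card, hTcard h]
  -- positivity of P
  have hPpos : 0 < P := by
    rw [hP]
    apply Finset.prod_pos
    intro j hj
    rw [Finset.mem_range] at hj
    have ha1 : 1 ≤ a := by
      rw [ha]; exact Nat.clog_pos (by norm_num) (by omega)
    have h2 : 2 ^ (a - 1) < r + 2 := by
      rw [ha]; exact Nat.pow_pred_clog_lt_self (x := r + 2) (by norm_num) (by omega)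
    have h3 : 2 ^ j ≤ 2 ^ (a - 1) := Nat.pow_le_pow_right (by norm_num) (by omega)
    omega
  -- P ≤ N h for bad h
  have hPleN : ∀ h ∈ Bad, P ≤ N h := by
    intro h hh
    rw [hBad, Finset.mem_filter] at hh
    have h1 : P ≤ ∏ j ∈ Finset.range a, ((T h).card + 1 - 2 ^ j) := by
      rw [hP]
      apply Finset.prod_le_prod'
      intro j _
      have : r + 1 ≤ (T h).card := hh.2
      omega
    exact h1.trans (goodSet_card u hu_inj hu_ne (T h) a)
  -- double counting
  set Q : (Fin a → Fin m) → Prop := fun t => LinearIndependent (ZMod 2) (u ∘ t) with hQ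
  set F : (Fin a → Fin m) → ℕ :=
    fun t => (Finset.univ.filter (fun h : Lin d ℓ => ∀ j, h (u (t j)) = y)).card with hF
  set Indep : Finset (Fin a → Fin m) := Finset.univ.filter Q with hIndep
  have hswap : ∑ h : Lin d ℓ, N h = ∑ t ∈ Indep, F t := by
    have step1 : ∀ h : Lin d ℓ, N h =
        ∑ t : Fin a → Fin m, if ((∀ j, h (u (t j)) = y) ∧ Q t) then 1 else 0 := by
      intro h
      rw [hN]
      show (goodSet u (T h) a).card = _
      rw [goodSet, Finset.card_filter]
      apply Finset.sum_congr rfl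
      intro t _
      congr 1
      apply propext
      constructor
      · rintro ⟨h1, h2⟩
        refine ⟨fun j => ?_, h2⟩
        have := h1 j
        simp only [hT, Finset.mem_filter, Finset.mem_univ, true_and] at this
        exact this
      · rintro ⟨h1, h2⟩
        refine ⟨fun j => ?_, h2⟩
        simp only [hT, Finset.mem_filter, Finset.mem_univ, true_and]
        exact h1 j
    calc ∑ h : Lin d ℓ, N h
        = ∑ h : Lin d ℓ, ∑ t : Fin a → Fin m,
            if ((∀ j, h (u (t j)) = y) ∧ Q t) then 1 else 0 := by
          exact Finset.sum_congr rfl (fun h _ => step1 h)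
      _ = ∑ t : Fin a → Fin m, ∑ h : Lin d ℓ,
            if ((∀ j, h (u (t j)) = y) ∧ Q t) then 1 else 0 := Finset.sum_comm
      _ = ∑ t : Fin a → Fin m, if Q t then F t else 0 := by
          apply Finset.sum_congr rfl
          intro t _
          by_cases hq : Q t
          · simp only [hq, and_true, if_true]
            rw [hF]
            exact (Finset.card_filter _ _).symm
          · simp [hq]
      _ = ∑ t ∈ Indep, F t := by
          rw [hIndep, Finset.sum_filter]
  -- fiber formula
  have hfiber : ∀ t ∈ Indep, F t * (2 ^ ℓ) ^ a = A := by
    intro t ht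
    rw [hIndep, Finset.mem_filter] at ht
    have := fiber_card_mul (u ∘ t) ht.2 (fun _ => y)
    rw [Nat.card_eq_fintype_card, Nat.card_eq_fintype_card, Fintype.card_subtype] at this
    rw [hF, hA]
    convert this using 3
    rfl
  -- chain of natural-number inequalities
  have hIndepcard : Indep.card ≤ m ^ a := by
    calc Indep.card ≤ Fintype.card (Fin a → Fin m) := Finset.card_le_univ _
      _ = m ^ a := by simp
  have hmain : Bad.card * P * (2 ^ ℓ) ^ a ≤ m ^ a * A := by
    have h1 : Bad.card * P ≤ ∑ h : Lin d ℓ, N h := by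
      calc Bad.card * P = Bad.card • P := by rw [smul_eq_mul]
        _ ≤ ∑ h ∈ Bad, N h := Finset.card_nsmul_le_sum _ _ _ hPleN
        _ ≤ ∑ h : Lin d ℓ, N h :=
            Finset.sum_le_sum_of_subset (Finset.subset_univ _)
    calc Bad.card * P * (2 ^ ℓ) ^ a ≤ (∑ h : Lin d ℓ, N h) * (2 ^ ℓ) ^ a :=
          Nat.mul_le_mul_right _ h1
      _ = ∑ t ∈ Indep, F t * (2 ^ ℓ) ^ a := by rw [hswap, Finset.sum_mul]
      _ = ∑ _t ∈ Indep, A := Finset.sum_congr rfl hfiber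
      _ = Indep.card * A := by rw [Finset.sum_const, smul_eq_mul]
      _ ≤ m ^ a * A := Nat.mul_le_mul_right _ hIndepcard
  -- pass to the reals
  have hApos : 0 < A := Fintype.card_pos
  rw [hnum, Nat.card_eq_fintype_card, ← hA, hlam, hn]
  have hrw : ((m : ℝ) / ((2 ^ ℓ : ℕ) : ℝ)) ^ a * ((P : ℕ) : ℝ)⁻¹
      = (m : ℝ) ^ a / (((2 ^ ℓ : ℕ) : ℝ) ^ a * (P : ℝ)) := by
    rw [div_pow, ← div_eq_mul_inv, div_div]
  push_cast only [Nat.cast_pow, Nat.cast_ofNat] at hrw ⊢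
  rw [hrw]
  rw [div_le_div_iff₀ (by exact_mod_cast hApos) (by positivity)]
  have : (Bad.card : ℝ) * ((2 : ℝ) ^ ℓ) ^ a * (P : ℝ) ≤ (m : ℝ) ^ a * (A : ℝ) := by
    exact_mod_cast calc Bad.card * (2 ^ ℓ) ^ a * P = Bad.card * P * (2 ^ ℓ) ^ a := by ring
      _ ≤ m ^ a * A := hmain
  linarith [this]
end

section
/- Let n = 2^ℓ, let S be a set of m distinct nonzero vectors in F_2^d, let h : F_2^d → F_2^ℓ be a uniformly random linear map, fix y ∈ F_2^ℓ, and define Z_y = |{x ∈ S : h(x) = y}| and λ = m/n. Then for every integer a ≥ 1, Pr[Z_y > 2^a - 2] ≤ γ^{-1} λ^a 2^{-a^2}, where γ = ∏_{j=1}^∞ (1 - 2^{-j}). -/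
/-- γ = ∏_{j=1}^∞ (1 - 2^{-j}). -/
noncomputable def gammaProd : ℝ := ∏' j : ℕ, (1 - (2 : ℝ)⁻¹ ^ (j + 1))

noncomputable instance LinFintype (d ℓ : ℕ) : Fintype (Lin d ℓ) :=
  Fintype.ofInjective DFunLike.coe DFunLike.coe_injective

open Finset

section gammaFacts

private noncomputable def gfac (j : ℕ) : ℝ := 1 - (2 : ℝ)⁻¹ ^ (j + 1)

private lemma gfac_bounds (j : ℕ) : (2:ℝ)⁻¹ ≤ gfac j ∧ gfac j ≤ 1 := by
  have h1 : ((2:ℝ)⁻¹)^(j+1) ≤ 2⁻¹ := by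
    have := pow_le_pow_of_le_one (by norm_num : (0:ℝ) ≤ 2⁻¹) (by norm_num : (2:ℝ)⁻¹ ≤ 1)
      (Nat.le_add_left 1 j)
    simpa using this
  have h2 : (0:ℝ) < ((2:ℝ)⁻¹)^(j+1) := by positivity
  constructor <;> [skip; skip] <;> unfold gfac <;> nlinarith

private lemma gfac_pos (j : ℕ) : 0 < gfac j := lt_of_lt_of_le (by norm_num) (gfac_bounds j).1

private lemma summable_log_gfac : Summable (fun j => Real.log (gfac j)) := by
  have key : Summable (fun j => - Real.log (gfac j)) := by
    apply Summable.of_nonneg_of_le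
    · intro j
      simp only [neg_nonneg]
      exact Real.log_nonpos (le_of_lt (gfac_pos j)) (gfac_bounds j).2
    · intro j
      show -Real.log (gfac j) ≤ ((2:ℝ)⁻¹)^j
      have hlog : Real.log ((gfac j)⁻¹) ≤ (gfac j)⁻¹ - 1 :=
        Real.log_le_sub_one_of_pos (inv_pos.mpr (gfac_pos j))
      rw [Real.log_inv] at hlog
      have hinv : (gfac j)⁻¹ ≤ 2 := by
        rw [inv_le_comm₀ (gfac_pos j) (by norm_num)]
        simpa using (gfac_bounds j).1
      have hx : (1 : ℝ) - gfac j = ((2:ℝ)⁻¹)^(j+1) := by simp [gfac]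
      have hmul : gfac j * (gfac j)⁻¹ = 1 := mul_inv_cancel₀ (ne_of_gt (gfac_pos j))
      have h2x : (gfac j)⁻¹ - 1 ≤ 2 * ((2:ℝ)⁻¹)^(j+1) := by
        have hpos := gfac_pos j
        have hle1 := (gfac_bounds j).2
        nlinarith [mul_nonneg (sub_nonneg.mpr hle1) (sub_nonneg.mpr hinv)]
      have : (2:ℝ) * ((2:ℝ)⁻¹)^(j+1) = ((2:ℝ)⁻¹)^j := by
        rw [pow_succ]; ring
      linarith
    · exact summable_geometric_of_lt_one (by norm_num) (by norm_num)
  simpa using key.neg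

private lemma hasProd_gfac :
    HasProd gfac (Real.exp (∑' j, Real.log (gfac j))) := by
  have hs := summable_log_gfac.hasSum
  have ht := (Real.continuous_exp.tendsto _).comp hs
  have heq : (fun s : Finset ℕ => Real.exp (∑ i ∈ s, Real.log (gfac i)))
      = fun s : Finset ℕ => ∏ i ∈ s, gfac i := by
    funext s
    rw [Real.exp_sum]
    exact Finset.prod_congr rfl fun i _ => Real.exp_log (gfac_pos i)
  unfold HasProd
  rw [← heq]
  exact ht

private lemma gammaProd_pos : 0 < gammaProd := by
  have := hasProd_gfac.tprod_eq
  unfold gammaProd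
  have hg : (fun j : ℕ => 1 - (2 : ℝ)⁻¹ ^ (j + 1)) = gfac := rfl
  rw [hg, this]
  exact Real.exp_pos _

private lemma gammaProd_le_partial (a : ℕ) :
    gammaProd ≤ ∏ j ∈ Finset.range a, (1 - (2 : ℝ)⁻¹ ^ (j + 1)) := by
  have hg : (fun j : ℕ => 1 - (2 : ℝ)⁻¹ ^ (j + 1)) = gfac := rfl
  have htend := hasProd_gfac.tendsto_prod_nat
  have hgp : gammaProd = Real.exp (∑' j, Real.log (gfac j)) := by
    unfold gammaProd; rw [hg, hasProd_gfac.tprod_eq]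
  rw [hgp]
  show Real.exp _ ≤ ∏ j ∈ Finset.range a, gfac j
  apply le_of_tendsto htend
  filter_upwards [Filter.eventually_ge_atTop a] with n hn
  rw [← Finset.prod_range_mul_prod_Ico gfac hn]
  have h1 : ∏ i ∈ Finset.Ico a n, gfac i ≤ 1 :=
    Finset.prod_le_one (fun i _ => le_of_lt (gfac_pos i)) (fun i _ => (gfac_bounds i).2)
  have h0 : 0 ≤ ∏ j ∈ Finset.range a, gfac j :=
    Finset.prod_nonneg fun i _ => le_of_lt (gfac_pos i)
  calc (∏ i ∈ Finset.range a, gfac i) * ∏ i ∈ Finset.Ico a n, gfac i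
      ≤ (∏ i ∈ Finset.range a, gfac i) * 1 := mul_le_mul_of_nonneg_left h1 h0
    _ = ∏ i ∈ Finset.range a, gfac i := mul_one _

end gammaFacts

section counting

variable {d : ℕ}

local notation "V" => (Fin d → ZMod 2)

open scoped Classical in
/-- Tuples of length k with entries in T that are linearly independent. -/
noncomputable def indepT (T : Finset (Fin d → ZMod 2)) (k : ℕ) :
    Finset (Fin k → (Fin d → ZMod 2)) :=
  Finset.univ.filter (fun f => (∀ i, f i ∈ T) ∧ LinearIndependent (ZMod 2) f)

lemma mem_indepT {T : Finset (Fin d → ZMod 2)} {k : ℕ} {f : Fin k → (Fin d → ZMod 2)} :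
    f ∈ indepT T k ↔ (∀ i, f i ∈ T) ∧ LinearIndependent (ZMod 2) f := by
  classical
  simp [indepT]

lemma indepT_card_lower (T : Finset (Fin d → ZMod 2)) (hT : (0 : Fin d → ZMod 2) ∉ T) :
    ∀ k : ℕ, ∏ i ∈ Finset.range k, (T.card + 1 - 2 ^ i) ≤ (indepT T k).card := by
  classical
  intro k
  induction k with
  | zero =>
    simp only [Finset.range_zero, Finset.prod_empty]
    refine Finset.card_pos.mpr ⟨fun i => i.elim0, ?_⟩
    rw [mem_indepT]
    exact ⟨fun i => i.elim0, linearIndependent_empty_type⟩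
  | succ k ih =>
    -- the sigma set of (independent k-tuple, new vector outside its span)
    set sig : Finset ((_ : Fin k → V) × V) :=
      (indepT T k).sigma
        (fun g => T.filter (fun x => x ∉ Submodule.span (ZMod 2) (Set.range g))) with hsig
    have hmaps : ∀ p ∈ sig, (Fin.snoc p.1 p.2 : Fin (k+1) → V) ∈ indepT T (k+1) := by
      rintro ⟨g, x⟩ hp
      rw [Finset.mem_sigma] at hp
      obtain ⟨hg, hx⟩ := hp
      rw [Finset.mem_filter] at hx
      rw [mem_indepT] at hg ⊢
      constructor
      · intro i
        refine Fin.lastCases ?_ ?_ i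
        · simpa using hx.1
        · intro j; simpa using hg.1 j
      · exact linearIndependent_fin_snoc.mpr ⟨hg.2, hx.2⟩
    have hinj : Set.InjOn (fun p : (_ : Fin k → V) × V => (Fin.snoc p.1 p.2 : Fin (k+1) → V))
        ↑sig := by
      rintro ⟨g, x⟩ _ ⟨g', x'⟩ _ h
      simp only at h
      have hgg : g = g' := by
        funext i
        have := congrFun h (Fin.castSucc i)
        simpa using this
      have hxx : x = x' := by
        have := congrFun h (Fin.last k)
        simpa using this
      simp [hgg, hxx]
    have hcard1 : sig.card ≤ (indepT T (k+1)).card :=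
      Finset.card_le_card_of_injOn _ hmaps hinj
    -- lower bound each fiber
    have hfiber : ∀ g ∈ indepT T k,
        T.card + 1 - 2 ^ k
          ≤ (T.filter (fun x => x ∉ Submodule.span (ZMod 2) (Set.range g))).card := by
      intro g hg
      rw [mem_indepT] at hg
      set P := Submodule.span (ZMod 2) (Set.range g) with hP
      have hPcard : Fintype.card P = 2 ^ k := by
        have b : Module.Basis (Fin k) (ZMod 2) P := Module.Basis.span hg.2
        rw [Module.card_fintype b, ZMod.card 2, Fintype.card_fin]
      have hsub : T.filter (fun x => x ∈ P) ⊆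
          (Finset.univ.filter (fun x : V => x ∈ P)).erase 0 := by
        intro x hx
        rw [Finset.mem_filter] at hx
        rw [Finset.mem_erase]
        refine ⟨?_, by simp [hx.2]⟩
        rintro rfl
        exact hT hx.1
      have hcount : (Finset.univ.filter (fun x : V => x ∈ P)).card = 2 ^ k := by
        rw [← hPcard]
        exact (Fintype.card_subtype _).symm
      have hin : (T.filter (fun x => x ∈ P)).card ≤ 2 ^ k - 1 := by
        calc (T.filter (fun x => x ∈ P)).card
            ≤ ((Finset.univ.filter (fun x : V => x ∈ P)).erase 0).card :=
              Finset.card_le_card hsub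
          _ = 2 ^ k - 1 := by
              rw [Finset.card_erase_of_mem (by simp), hcount]
      have hsplit := Finset.card_filter_add_card_filter_not
        (s := T) (p := fun x => x ∈ P)
      have h2k : 1 ≤ 2 ^ k := Nat.one_le_two_pow
      omega
    have hsum : (indepT T k).card * (T.card + 1 - 2 ^ k) ≤ sig.card := by
      rw [hsig, Finset.card_sigma]
      calc (indepT T k).card * (T.card + 1 - 2 ^ k)
          = ∑ _g ∈ indepT T k, (T.card + 1 - 2 ^ k) := by
            rw [Finset.sum_const, smul_eq_mul]
        _ ≤ ∑ g ∈ indepT T k,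
              (T.filter (fun x => x ∉ Submodule.span (ZMod 2) (Set.range g))).card :=
            Finset.sum_le_sum hfiber
    calc ∏ i ∈ Finset.range (k+1), (T.card + 1 - 2 ^ i)
        = (∏ i ∈ Finset.range k, (T.card + 1 - 2 ^ i)) * (T.card + 1 - 2 ^ k) :=
          Finset.prod_range_succ _ _
      _ ≤ (indepT T k).card * (T.card + 1 - 2 ^ k) :=
          Nat.mul_le_mul_right _ ih
      _ ≤ sig.card := hsum
      _ ≤ (indepT T (k+1)).card := hcard1

lemma indepT_card_upper (S : Finset (Fin d → ZMod 2)) (a : ℕ) :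
    (indepT S a).card ≤ S.card ^ a := by
  classical
  have hsub : indepT S a ⊆ Fintype.piFinset (fun _ : Fin a => S) := by
    intro f hf
    rw [mem_indepT] at hf
    rw [Fintype.mem_piFinset]
    exact hf.1
  calc (indepT S a).card ≤ (Fintype.piFinset (fun _ : Fin a => S)).card :=
        Finset.card_le_card hsub
    _ = S.card ^ a := by
        rw [Fintype.card_piFinset]
        simp

end counting

/-- every fiber of a surjective additive hom between finite groups has
card = card G / card H. -/
lemma fiber_card_mul_s14 {G H : Type*} [AddCommGroup G] [AddCommGroup H] [Fintype G] [Fintype H]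
    [DecidableEq H] (φ : G →+ H) (hφ : Function.Surjective φ) (c : H) :
    (Finset.univ.filter (fun x => φ x = c)).card * Fintype.card H = Fintype.card G := by
  classical
  have key : ∀ b : H, (Finset.univ.filter (fun x => φ x = b)).card
      = (Finset.univ.filter (fun x => φ x = c)).card := by
    intro b
    obtain ⟨u, hu⟩ := hφ (b - c)
    apply Finset.card_bij (fun x _ => x - u)
    · intro x hx
      simp only [Finset.mem_filter, Finset.mem_univ, true_and] at hx ⊢
      rw [map_sub, hx, hu]; abel
    · intro x _ y _ hxy
      exact sub_left_injective hxy
    · intro x hx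
      simp only [Finset.mem_filter, Finset.mem_univ, true_and] at hx
      refine ⟨x + u, ?_, by abel⟩
      simp only [Finset.mem_filter, Finset.mem_univ, true_and]
      rw [map_add, hx, hu]; abel
  have hfib := Finset.card_eq_sum_card_fiberwise
    (s := (Finset.univ : Finset G)) (t := (Finset.univ : Finset H)) (f := fun x => φ x)
    (fun x _ => Finset.mem_univ _)
  calc (Finset.univ.filter (fun x => φ x = c)).card * Fintype.card H
      = ∑ _b : H, (Finset.univ.filter (fun x => φ x = c)).card := by
        rw [Finset.sum_const, smul_eq_mul, Finset.card_univ, mul_comm]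
    _ = ∑ b : H, (Finset.univ.filter (fun x => φ x = b)).card :=
        Finset.sum_congr rfl (fun b _ => (key b).symm)
    _ = Fintype.card G := by
        rw [← hfib, Finset.card_univ]

/-- extend values on a linearly independent family to a linear map. -/
lemma exists_linearMap_eq {K V W : Type*} [Field K] [AddCommGroup V] [Module K V]
    [AddCommGroup W] [Module K W] {k : ℕ} {f : Fin k → V}
    (hf : LinearIndependent K f) (g : Fin k → W) :
    ∃ h : V →ₗ[K] W, ∀ i, h (f i) = g i := by
  classical
  have hinj := hf.injective
  have hs : LinearIndepOn K id (Set.range f) := (linearIndepOn_id_range_iff hinj).mpr hf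
  let B := Module.Basis.extend hs
  let c : V → W := fun v => if hv : ∃ i, f i = v then g hv.choose else 0
  refine ⟨B.constr K (fun b => c b), fun i => ?_⟩
  have hmem : f i ∈ hs.extend (Set.subset_univ _) := Module.Basis.subset_extend hs ⟨i, rfl⟩
  have hBi : (f i : V) = B ⟨f i, hmem⟩ := (Module.Basis.extend_apply_self hs ⟨f i, hmem⟩).symm
  rw [hBi, Module.Basis.constr_basis]
  show c (f i) = g i
  have hv : ∃ j, f j = f i := ⟨i, rfl⟩
  simp only [c, dif_pos hv]
  exact congrArg g (hinj hv.choose_spec)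

lemma eval_fiber_card (d ℓ a : ℕ) (f : Fin a → (Fin d → ZMod 2))
    (hf : LinearIndependent (ZMod 2) f) (y : Fin ℓ → ZMod 2) :
    (Finset.univ.filter (fun h : Lin d ℓ => ∀ i, h (f i) = y)).card * (2 ^ ℓ) ^ a
      = Fintype.card (Lin d ℓ) := by
  classical
  let E : Lin d ℓ →+ (Fin a → (Fin ℓ → ZMod 2)) :=
    { toFun := fun h i => h (f i)
      map_zero' := rfl
      map_add' := fun h₁ h₂ => rfl }
  have hsurj : Function.Surjective E := by
    intro g
    obtain ⟨h, hh⟩ := exists_linearMap_eq hf g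
    exact ⟨h, funext hh⟩
  have hmain := fiber_card_mul_s14 E hsurj (fun _ => y)
  have hcard : Fintype.card (Fin a → Fin ℓ → ZMod 2) = (2 ^ ℓ) ^ a := by
    simp [ZMod.card 2]
  rw [hcard] at hmain
  rw [← hmain]
  have hfe : (Finset.univ.filter (fun h : Lin d ℓ => ∀ i, h (f i) = y))
      = Finset.univ.filter (fun x => E x = fun _ => y) := by
    apply Finset.filter_congr
    intro h _
    constructor
    · intro hh; funext i; exact hh i
    · intro hh i; exact congrFun hh i
  rw [hfe]

/-- Let n = 2^ℓ, let S be a set of m distinct nonzero vectors in F_2^d, let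
h : F_2^d → F_2^ℓ be a uniformly random linear map, fix y ∈ F_2^ℓ, and define
Z_y = |{x ∈ S : h(x) = y}| and λ = m/n. Then for every integer a ≥ 1,
Pr[Z_y > 2^a - 2] ≤ γ^{-1} λ^a 2^{-a^2}, where γ = ∏_{j=1}^∞ (1 - 2^{-j}). -/
theorem stmt_14 (ℓ d m n : ℕ) (hn : n = 2 ^ ℓ)
    (S : Finset (Fin d → ZMod 2)) (hScard : S.card = m)
    (hS0 : (0 : Fin d → ZMod 2) ∉ S)
    (y : Fin ℓ → ZMod 2) (lam : ℝ) (hlam : lam = (m : ℝ) / n)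
    (a : ℕ) (ha : 1 ≤ a) :
    (Nat.card {h : Lin d ℓ // 2 ^ a - 2 < (S.filter (fun x => h x = y)).card} : ℝ) /
        (Nat.card (Lin d ℓ) : ℝ) ≤
      gammaProd⁻¹ * lam ^ a * ((2 : ℝ) ^ (a ^ 2))⁻¹ := by
  classical
  subst hn hlam hScard
  set K := Fintype.card (Lin d ℓ) with hK
  set bad := Finset.univ.filter
    (fun h : Lin d ℓ => 2 ^ a - 2 < (S.filter (fun x => h x = y)).card) with hbad
  set P := ∏ i ∈ Finset.range a, (2 ^ a - 2 ^ i) with hP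
  -- Step A: fibers of the tuple-counting
  have hTeq : ∀ h : Lin d ℓ, indepT (S.filter (fun x => h x = y)) a
      = (indepT S a).filter (fun f => ∀ i, h (f i) = y) := by
    intro h
    ext f
    simp only [mem_indepT, Finset.mem_filter]
    constructor
    · rintro ⟨h1, h2⟩
      exact ⟨⟨fun i => (h1 i).1, h2⟩, fun i => (h1 i).2⟩
    · rintro ⟨⟨h1, h2⟩, h3⟩
      exact ⟨fun i => ⟨h1 i, h3 i⟩, h2⟩
  -- Step B: double counting
  have hswap : ∑ h : Lin d ℓ, ((indepT S a).filter (fun f => ∀ i, h (f i) = y)).card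
      = ∑ f ∈ indepT S a,
          (Finset.univ.filter (fun h : Lin d ℓ => ∀ i, h (f i) = y)).card := by
    simp only [Finset.card_filter]
    rw [Finset.sum_comm]
  -- upper bound
  have hupper : (∑ h : Lin d ℓ, (indepT (S.filter (fun x => h x = y)) a).card) * (2 ^ ℓ) ^ a
      ≤ S.card ^ a * K := by
    simp only [hTeq]
    rw [hswap, Finset.sum_mul]
    have : ∀ f ∈ indepT S a,
        (Finset.univ.filter (fun h : Lin d ℓ => ∀ i, h (f i) = y)).card * (2 ^ ℓ) ^ a = K := by
      intro f hf
      exact eval_fiber_card d ℓ a f (mem_indepT.mp hf).2 y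
    rw [Finset.sum_congr rfl this, Finset.sum_const, smul_eq_mul]
    exact Nat.mul_le_mul_right _ (indepT_card_upper S a)
  clear hswap hTeq
  -- lower bound
  have hlower : bad.card * P ≤ ∑ h : Lin d ℓ, (indepT (S.filter (fun x => h x = y)) a).card := by
    calc bad.card * P = ∑ _h ∈ bad, P := by rw [Finset.sum_const, smul_eq_mul]
      _ ≤ ∑ h ∈ bad, (indepT (S.filter (fun x => h x = y)) a).card := by
          apply Finset.sum_le_sum
          intro h hh
          rw [hbad, Finset.mem_filter] at hh
          set T := S.filter (fun x => h x = y) with hT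
          have hT0 : (0 : Fin d → ZMod 2) ∉ T := by
            rw [hT, Finset.mem_filter]
            rintro ⟨h0, -⟩
            exact hS0 h0
          have hTc : 2 ^ a - 2 < T.card := hh.2
          have h1 : 1 ≤ 2 ^ a := Nat.one_le_two_pow
          have hPle : P ≤ ∏ i ∈ Finset.range a, (T.card + 1 - 2 ^ i) := by
            rw [hP]
            apply Finset.prod_le_prod'
            intro i hi
            have h2i : (2:ℕ) ^ i ≤ 2 ^ a :=
              Nat.pow_le_pow_right (by norm_num) (le_of_lt (Finset.mem_range.mp hi))
            omega
          exact le_trans hPle (indepT_card_lower T hT0 a)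
      _ ≤ ∑ h : Lin d ℓ, (indepT (S.filter (fun x => h x = y)) a).card := by
          apply Finset.sum_le_sum_of_subset (Finset.subset_univ bad)
  have hmain : bad.card * P * (2 ^ ℓ) ^ a ≤ S.card ^ a * K :=
    le_trans (Nat.mul_le_mul_right _ hlower) hupper
  -- bridge Nat.card
  have hBcard : Nat.card {h : Lin d ℓ // 2 ^ a - 2 < (S.filter (fun x => h x = y)).card}
      = bad.card := by
    rw [Nat.card_eq_fintype_card, hbad]
    exact Fintype.card_subtype _
  have hKcard : Nat.card (Lin d ℓ) = K := Nat.card_eq_fintype_card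
  rw [hBcard, hKcard]
  -- real arithmetic
  have hK0 : 0 < K := Fintype.card_pos
  set Q := ∏ j ∈ Finset.range a, (1 - (2:ℝ)⁻¹ ^ (j + 1)) with hQ
  have hQpos : 0 < Q := Finset.prod_pos fun j _ => gfac_pos j
  have hγle : gammaProd ≤ Q := gammaProd_le_partial a
  have hγpos := gammaProd_pos
  have hPQ : (P : ℝ) = 2 ^ (a ^ 2) * Q := by
    rw [hP, Nat.cast_prod]
    have hc : ∀ i ∈ Finset.range a, ((2 ^ a - 2 ^ i : ℕ) : ℝ) = (2:ℝ) ^ a - 2 ^ i := by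
      intro i hi
      have h2i : (2:ℕ) ^ i ≤ 2 ^ a :=
        Nat.pow_le_pow_right (by norm_num) (le_of_lt (Finset.mem_range.mp hi))
      push_cast [Nat.cast_sub h2i]
      ring
    rw [Finset.prod_congr rfl hc,
      ← Finset.prod_range_reflect (fun j => (2:ℝ) ^ a - 2 ^ j) a]
    have hd : ∀ j ∈ Finset.range a,
        (2:ℝ) ^ a - 2 ^ (a - 1 - j) = 2 ^ a * (1 - (2:ℝ)⁻¹ ^ (j + 1)) := by
      intro j hj
      have hj' := Finset.mem_range.mp hj
      have hexp : (a - 1 - j) + (j + 1) = a := by omega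
      have h2 : (2:ℝ) ^ a * ((2:ℝ)⁻¹) ^ (j + 1) = (2:ℝ) ^ (a - 1 - j) := by
        rw [← hexp, pow_add, mul_assoc, ← mul_pow]
        norm_num
      rw [mul_sub, mul_one, h2]
    rw [Finset.prod_congr rfl hd, Finset.prod_mul_distrib, Finset.prod_const,
      Finset.card_range, ← pow_mul, ← pow_two, hQ]
  have hmainR : (bad.card : ℝ) * P * ((2:ℝ) ^ ℓ) ^ a ≤ (S.card : ℝ) ^ a * K := by
    exact_mod_cast hmain
  have hD : (0:ℝ) < gammaProd * 2 ^ (a ^ 2) * ((2:ℝ) ^ ℓ) ^ a := by positivity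
  have key : (bad.card : ℝ) / K ≤ (S.card : ℝ) ^ a / (gammaProd * 2 ^ (a ^ 2) * ((2:ℝ) ^ ℓ) ^ a) := by
    rw [div_le_div_iff₀ (by exact_mod_cast hK0) hD]
    have hPge : gammaProd * 2 ^ (a ^ 2) ≤ (P : ℝ) := by
      rw [hPQ, mul_comm ((2:ℝ) ^ (a ^ 2)) Q]
      exact mul_le_mul_of_nonneg_right hγle (by positivity)
    calc (bad.card : ℝ) * (gammaProd * 2 ^ (a ^ 2) * ((2:ℝ) ^ ℓ) ^ a)
        ≤ (bad.card : ℝ) * ((P : ℝ) * ((2:ℝ) ^ ℓ) ^ a) := by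
          apply mul_le_mul_of_nonneg_left _ (Nat.cast_nonneg _)
          exact mul_le_mul_of_nonneg_right hPge (by positivity)
      _ = (bad.card : ℝ) * P * ((2:ℝ) ^ ℓ) ^ a := by ring
      _ ≤ (S.card : ℝ) ^ a * K := hmainR
  have hfin : (S.card : ℝ) ^ a / (gammaProd * 2 ^ (a ^ 2) * ((2:ℝ) ^ ℓ) ^ a)
      = gammaProd⁻¹ * ((S.card : ℝ) / ((2:ℕ) ^ ℓ : ℕ)) ^ a * ((2 : ℝ) ^ (a ^ 2))⁻¹ := by
    push_cast
    rw [div_pow, div_eq_mul_inv, div_eq_mul_inv, mul_inv, mul_inv]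
    ring
  rw [← hfin]
  exact key
end
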